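/- If r* ∈ V_S(x) minimizes C over V_S(x), then there exists a constant λ such that 2κ r*_t + 2φ∫_0^t X*_s ds - ∫_0^t m(s) ds = λ for almost every t ∈ [0,T]. -/

import Mathlib

open MeasureTheory

/-- The cost functional of the static optimal execution problem. -/
noncomputable def execCost (κ φ T x : ℝ) (m r : ℝ → ℝ) : ℝ :=
  κ * (∫ t in (0:ℝ)..T, (r t) ^ 2)
    + φ * (∫ t in (0:ℝ)..T, (x - ∫ s in (0:ℝ)..t, r s) ^ 2)
    - ∫ t in (0:ℝ)..T, (∫ s in (0:ℝ)..t, m s) * r t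

/-- Admissible static strategies: integrable (with integrable square) and fuel constraint. -/
def execAdm (T x : ℝ) (r : ℝ → ℝ) : Prop :=
  IntervalIntegrable r volume 0 T ∧
  IntervalIntegrable (fun t => (r t) ^ 2) volume 0 T ∧
  (∫ s in (0:ℝ)..T, r s) = x

open Set intervalIntegral in
lemma exec_parts {T : ℝ} (hT : 0 ≤ T) (f g : ℝ → ℝ)
    (hf : IntervalIntegrable f volume 0 T) (hg : IntervalIntegrable g volume 0 T) :
    (∫ t in (0:ℝ)..T, f t * ∫ s in (0:ℝ)..t, g s)
      + (∫ t in (0:ℝ)..T, g t * ∫ s in (0:ℝ)..t, f s)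
      = (∫ t in (0:ℝ)..T, f t) * (∫ t in (0:ℝ)..T, g t) := by
  set μ := volume.restrict (Ioc (0:ℝ) T) with hμ
  have hfI : IntegrableOn f (Ioc 0 T) := (intervalIntegrable_iff_integrableOn_Ioc_of_le hT).1 hf
  have hgI : IntegrableOn g (Ioc 0 T) := (intervalIntegrable_iff_integrableOn_Ioc_of_le hT).1 hg
  set K : ℝ × ℝ → ℝ := fun p => if p.2 ≤ p.1 then f p.1 * g p.2 else 0 with hK
  have hKind : K = ({p : ℝ × ℝ | p.2 ≤ p.1}).indicator (fun p => f p.1 * g p.2) := by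
    funext p; simp [hK, Set.indicator_apply, Set.mem_setOf_eq]
  have hmeas : MeasurableSet {p : ℝ × ℝ | p.2 ≤ p.1} :=
    (isClosed_le continuous_snd continuous_fst).measurableSet
  have hKint : Integrable K (μ.prod μ) := by
    rw [hKind]
    exact (Integrable.mul_prod hfI hgI).indicator hmeas
  have hswap : ∫ t, (∫ s, K (t, s) ∂μ) ∂μ = ∫ s, (∫ t, K (t, s) ∂μ) ∂μ :=
    integral_integral_swap (by exact hKint)
  set A := ∫ t in (0:ℝ)..T, f t with hA
  set B := ∫ t in (0:ℝ)..T, g t with hB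
  have h1 : ∫ t, (∫ s, K (t, s) ∂μ) ∂μ = ∫ t in (0:ℝ)..T, f t * ∫ s in (0:ℝ)..t, g s := by
    rw [integral_of_le hT, hμ]
    refine setIntegral_congr_fun measurableSet_Ioc (fun t ht => ?_)
    have : ∀ s, K (t, s) = (Iic t).indicator (fun s => f t * g s) s := fun s => by
      simp [hK, Set.indicator_apply]
    simp only [this]
    rw [setIntegral_indicator measurableSet_Iic, Set.Ioc_inter_Iic, min_eq_right ht.2,
      MeasureTheory.integral_const_mul, ← integral_of_le (le_of_lt ht.1)]
  have h2 : ∫ s, (∫ t, K (t, s) ∂μ) ∂μ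
      = ∫ s in (0:ℝ)..T, g s * (A - ∫ u in (0:ℝ)..s, f u) := by
    rw [integral_of_le hT, hμ]
    refine setIntegral_congr_fun measurableSet_Ioc (fun s hs => ?_)
    have : ∀ t, K (t, s) = (Ici s).indicator (fun t => f t * g s) t := fun t => by
      simp [hK, Set.indicator_apply]
    simp only [this]
    rw [setIntegral_indicator measurableSet_Ici]
    have hinter : Ioc 0 T ∩ Ici s = Icc s T := by
      ext t
      constructor
      · rintro ⟨⟨_, h2⟩, h3⟩; exact ⟨h3, h2⟩
      · rintro ⟨h1, h2⟩; exact ⟨⟨lt_of_lt_of_le hs.1 h1, h2⟩, h1⟩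
    rw [hinter, integral_Icc_eq_integral_Ioc, MeasureTheory.integral_mul_const,
      integral_of_le (le_of_lt hs.1)]
    have hI1 : IntegrableOn f (Ioc (0:ℝ) s) volume :=
      hfI.mono_set (fun u hu => ⟨hu.1, le_trans hu.2 hs.2⟩)
    have hI2 : IntegrableOn f (Ioc s T) volume :=
      hfI.mono_set (fun u hu => ⟨lt_trans hs.1 hu.1, hu.2⟩)
    have hdisj : Disjoint (Ioc (0:ℝ) s) (Ioc s T) := by
      rw [Set.disjoint_left]
      rintro u ⟨_, h2⟩ ⟨h3, _⟩
      exact absurd h3 (not_lt.mpr h2)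
    have hu : Ioc (0:ℝ) s ∪ Ioc s T = Ioc (0:ℝ) T := by
      ext u
      simp only [Set.mem_union, Set.mem_Ioc]
      constructor
      · rintro (⟨h1, h2⟩ | ⟨h1, h2⟩)
        · exact ⟨h1, le_trans h2 hs.2⟩
        · exact ⟨lt_trans hs.1 h1, h2⟩
      · rintro ⟨h1, h2⟩
        rcases le_or_gt u s with h | h
        · exact Or.inl ⟨h1, h⟩
        · exact Or.inr ⟨h, h2⟩
    have hsplit := setIntegral_union hdisj measurableSet_Ioc hI1 hI2
    rw [hu] at hsplit
    have hA' : A = (∫ t in Ioc (0:ℝ) s, f t) + ∫ t in Ioc s T, f t := by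
      rw [hA, integral_of_le hT]; exact hsplit
    have : ∫ t in Ioc s T, f t = A - ∫ t in Ioc (0:ℝ) s, f t := by linarith
    rw [this]; ring
  have hGcont : ContinuousOn (fun s => ∫ u in (0:ℝ)..s, f u) (uIcc (0:ℝ) T) :=
    continuousOn_primitive_interval' hf left_mem_uIcc
  have h3 : ∫ s in (0:ℝ)..T, g s * (A - ∫ u in (0:ℝ)..s, f u)
      = B * A - ∫ s in (0:ℝ)..T, g s * ∫ u in (0:ℝ)..s, f u := by
    have hgA : IntervalIntegrable (fun s => g s * A) volume 0 T := hg.mul_const A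
    have hgF : IntervalIntegrable (fun s => g s * ∫ u in (0:ℝ)..s, f u) volume 0 T :=
      hg.mul_continuousOn hGcont
    have : (∫ s in (0:ℝ)..T, g s * (A - ∫ u in (0:ℝ)..s, f u))
        = ∫ s in (0:ℝ)..T, (g s * A - g s * ∫ u in (0:ℝ)..s, f u) := by
      congr 1; funext s; ring
    rw [this, intervalIntegral.integral_sub hgA hgF, intervalIntegral.integral_mul_const]
  rw [h1, h2] at hswap
  rw [hswap, h3]; ring

open Set intervalIntegral in
lemma exec_mul_int {T : ℝ} (hT : 0 ≤ T) (f g : ℝ → ℝ)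
    (hf : IntervalIntegrable f volume 0 T)
    (hf2 : IntervalIntegrable (fun t => f t ^ 2) volume 0 T)
    (hg : IntervalIntegrable g volume 0 T)
    (hg2 : IntervalIntegrable (fun t => g t ^ 2) volume 0 T) :
    IntervalIntegrable (fun t => f t * g t) volume 0 T := by
  refine (intervalIntegrable_iff_integrableOn_Ioc_of_le hT).2 ?_
  have hfm := ((intervalIntegrable_iff_integrableOn_Ioc_of_le hT).1 hf).aestronglyMeasurable
  have hgm := ((intervalIntegrable_iff_integrableOn_Ioc_of_le hT).1 hg).aestronglyMeasurable
  have hb : Integrable (fun t => (f t ^ 2 + g t ^ 2) / 2) (volume.restrict (Ioc (0:ℝ) T)) :=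
    (((intervalIntegrable_iff_integrableOn_Ioc_of_le hT).1 hf2).add
      ((intervalIntegrable_iff_integrableOn_Ioc_of_le hT).1 hg2)).div_const 2
  refine hb.mono' (hfm.mul hgm) ?_
  refine Filter.Eventually.of_forall (fun t => ?_)
  rw [Real.norm_eq_abs, abs_mul]
  nlinarith [sq_nonneg (|f t| - |g t|), abs_nonneg (f t), abs_nonneg (g t),
    sq_abs (f t), sq_abs (g t)]

open Set intervalIntegral in
lemma exec_EL {κ φ T x : ℝ} (hκ : 0 < κ) (hφ : 0 < φ) (hT : 0 < T)
    (m rstar : ℝ → ℝ) (hm : IntervalIntegrable m volume 0 T)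
    (hrI : IntervalIntegrable rstar volume 0 T)
    (hr2I : IntervalIntegrable (fun t => rstar t ^ 2) volume 0 T)
    (hrx : (∫ s in (0:ℝ)..T, rstar s) = x)
    (hmin : ∀ r : ℝ → ℝ, execAdm T x r →
      execCost κ φ T x m rstar ≤ execCost κ φ T x m r)
    (h : ℝ → ℝ) (hhI : IntervalIntegrable h volume 0 T)
    (hh2I : IntervalIntegrable (fun t => h t ^ 2) volume 0 T)
    (hh0 : (∫ t in (0:ℝ)..T, h t) = 0) :
    (∫ t in (0:ℝ)..T,
      (2*κ*rstar t + 2*φ*(∫ s in (0:ℝ)..t, (x - ∫ u in (0:ℝ)..s, rstar u))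
        - (∫ s in (0:ℝ)..t, m s)) * h t) = 0 := by
  have hT' : (0:ℝ) ≤ T := hT.le
  set X : ℝ → ℝ := fun s => x - ∫ u in (0:ℝ)..s, rstar u with hXdef
  have hXcont : ContinuousOn X (Set.uIcc 0 T) := by
    rw [hXdef]
    exact continuousOn_const.sub (continuousOn_primitive_interval' hrI Set.left_mem_uIcc)
  have hXI : IntervalIntegrable X volume 0 T := hXcont.intervalIntegrable
  have hHcont : ContinuousOn (fun t => ∫ s in (0:ℝ)..t, h s) (Set.uIcc 0 T) :=
    continuousOn_primitive_interval' hhI Set.left_mem_uIcc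
  have hMcont : ContinuousOn (fun t => ∫ s in (0:ℝ)..t, m s) (Set.uIcc 0 T) :=
    continuousOn_primitive_interval' hm Set.left_mem_uIcc
  have hGcont : ContinuousOn (fun t => ∫ s in (0:ℝ)..t, X s) (Set.uIcc 0 T) :=
    continuousOn_primitive_interval' hXI Set.left_mem_uIcc
  have hrh : IntervalIntegrable (fun t => rstar t * h t) volume 0 T :=
    exec_mul_int hT' _ _ hrI hr2I hhI hh2I
  have hXH : IntervalIntegrable (fun t => X t * ∫ s in (0:ℝ)..t, h s) volume 0 T :=
    (hXcont.mul hHcont).intervalIntegrable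
  have hX2 : IntervalIntegrable (fun t => X t ^ 2) volume 0 T :=
    (hXcont.pow 2).intervalIntegrable
  have hH2 : IntervalIntegrable (fun t => (∫ s in (0:ℝ)..t, h s) ^ 2) volume 0 T :=
    (hHcont.pow 2).intervalIntegrable
  have hMr : IntervalIntegrable (fun t => (∫ s in (0:ℝ)..t, m s) * rstar t) volume 0 T :=
    hrI.continuousOn_mul hMcont
  have hMh : IntervalIntegrable (fun t => (∫ s in (0:ℝ)..t, m s) * h t) volume 0 T :=
    hhI.continuousOn_mul hMcont
  obtain ⟨L, hLdef⟩ : ∃ L : ℝ, L = 2*κ*(∫ t in (0:ℝ)..T, rstar t * h t)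
      - 2*φ*(∫ t in (0:ℝ)..T, X t * ∫ s in (0:ℝ)..t, h s)
      - (∫ t in (0:ℝ)..T, (∫ s in (0:ℝ)..t, m s) * h t) := ⟨_, rfl⟩
  obtain ⟨Q, hQdef⟩ : ∃ Q : ℝ, Q = κ*(∫ t in (0:ℝ)..T, h t ^ 2)
      + φ*(∫ t in (0:ℝ)..T, (∫ s in (0:ℝ)..t, h s) ^ 2) := ⟨_, rfl⟩
  have hXsq : (∫ t in (0:ℝ)..T, (x - ∫ s in (0:ℝ)..t, rstar s) ^ 2)
      = ∫ t in (0:ℝ)..T, X t ^ 2 := by simp only [hXdef]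
  have expand : ∀ ε : ℝ, execCost κ φ T x m (fun t => rstar t + ε * h t)
      = execCost κ φ T x m rstar + ε * L + ε^2 * Q := by
    intro ε
    have hterm1 : (∫ t in (0:ℝ)..T, (rstar t + ε * h t) ^ 2)
        = (∫ t in (0:ℝ)..T, rstar t ^ 2) + (ε*2)*(∫ t in (0:ℝ)..T, rstar t * h t)
          + ε^2*(∫ t in (0:ℝ)..T, h t ^ 2) := by
      have e : (fun t => (rstar t + ε * h t) ^ 2)
          = fun t => (rstar t ^ 2 + (ε*2)*(rstar t * h t)) + ε^2*(h t ^ 2) :=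
        funext fun t => by ring
      rw [e, intervalIntegral.integral_add (hr2I.add (hrh.const_mul (ε*2)))
          (hh2I.const_mul (ε^2)),
        intervalIntegral.integral_add hr2I (hrh.const_mul (ε*2)),
        intervalIntegral.integral_const_mul, intervalIntegral.integral_const_mul]
    have hinner : Set.EqOn (fun t => (x - ∫ s in (0:ℝ)..t, (rstar s + ε * h s)) ^ 2)
        (fun t => (X t ^ 2 - (ε*2)*(X t * ∫ s in (0:ℝ)..t, h s))
          + ε^2*((∫ s in (0:ℝ)..t, h s) ^ 2)) (Set.uIcc 0 T) := by
      intro t ht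
      have hsub : Set.uIcc (0:ℝ) t ⊆ Set.uIcc (0:ℝ) T :=
        Set.uIcc_subset_uIcc Set.left_mem_uIcc ht
      have hadds : (∫ s in (0:ℝ)..t, (rstar s + ε * h s))
          = (∫ s in (0:ℝ)..t, rstar s) + ε * ∫ s in (0:ℝ)..t, h s := by
        rw [intervalIntegral.integral_add (hrI.mono_set hsub)
            ((hhI.const_mul ε).mono_set hsub),
          intervalIntegral.integral_const_mul]
      simp only [hadds, hXdef]
      ring
    have hterm2 : (∫ t in (0:ℝ)..T, (x - ∫ s in (0:ℝ)..t, (rstar s + ε * h s)) ^ 2)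
        = (∫ t in (0:ℝ)..T, X t ^ 2)
          - (ε*2)*(∫ t in (0:ℝ)..T, X t * ∫ s in (0:ℝ)..t, h s)
          + ε^2*(∫ t in (0:ℝ)..T, (∫ s in (0:ℝ)..t, h s) ^ 2) := by
      rw [intervalIntegral.integral_congr hinner,
        intervalIntegral.integral_add (hX2.sub (hXH.const_mul (ε*2)))
          (hH2.const_mul (ε^2)),
        intervalIntegral.integral_sub hX2 (hXH.const_mul (ε*2)),
        intervalIntegral.integral_const_mul, intervalIntegral.integral_const_mul]
    have hterm3 : (∫ t in (0:ℝ)..T, (∫ s in (0:ℝ)..t, m s) * (rstar t + ε * h t))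
        = (∫ t in (0:ℝ)..T, (∫ s in (0:ℝ)..t, m s) * rstar t)
          + ε * (∫ t in (0:ℝ)..T, (∫ s in (0:ℝ)..t, m s) * h t) := by
      have e : (fun t => (∫ s in (0:ℝ)..t, m s) * (rstar t + ε * h t))
          = fun t => (∫ s in (0:ℝ)..t, m s) * rstar t
            + ε * ((∫ s in (0:ℝ)..t, m s) * h t) := funext fun t => by ring
      rw [e, intervalIntegral.integral_add hMr (hMh.const_mul ε),
        intervalIntegral.integral_const_mul]
    simp only [execCost]
    rw [hterm1, hterm2, hterm3, hXsq, hLdef, hQdef]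
    ring
  have adm : ∀ ε : ℝ, execAdm T x (fun t => rstar t + ε * h t) := by
    intro ε
    refine ⟨hrI.add (hhI.const_mul ε), ?_, ?_⟩
    · have e : (fun t => (rstar t + ε * h t) ^ 2)
          = fun t => (rstar t ^ 2 + (ε*2)*(rstar t * h t)) + ε^2*(h t ^ 2) :=
        funext fun t => by ring
      rw [e]
      exact (hr2I.add (hrh.const_mul (ε*2))).add (hh2I.const_mul (ε^2))
    · rw [intervalIntegral.integral_add hrI (hhI.const_mul ε),
        intervalIntegral.integral_const_mul, hrx, hh0]
      ring
  have key : ∀ ε : ℝ, 0 ≤ ε * L + ε^2 * Q := by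
    intro ε
    have h1 := hmin _ (adm ε)
    rw [expand ε] at h1
    linarith
  have hQ0 : 0 ≤ Q := by
    rw [hQdef]
    have i1 : 0 ≤ ∫ t in (0:ℝ)..T, h t ^ 2 :=
      intervalIntegral.integral_nonneg hT' (fun u _ => sq_nonneg _)
    have i2 : 0 ≤ ∫ t in (0:ℝ)..T, (∫ s in (0:ℝ)..t, h s) ^ 2 :=
      intervalIntegral.integral_nonneg hT' (fun u _ => sq_nonneg _)
    have := mul_nonneg hκ.le i1
    have := mul_nonneg hφ.le i2
    linarith
  have hL0 : L = 0 := by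
    by_contra hL
    have hQ1 : (0:ℝ) < 2*(Q+1) := by linarith
    set d : ℝ := L / (2*(Q+1)) with hd
    have hdL : d * (2*(Q+1)) = L := div_mul_cancel₀ L (ne_of_gt hQ1)
    have hk := key (-d)
    have hLsub : -d * L = -(d^2) * (2*(Q+1)) := by rw [← hdL]; ring
    have hd2 : d^2 * (Q+2) ≤ 0 := by nlinarith [hk, hLsub]
    have hd2' : d^2 ≤ 0 := by nlinarith [hd2, hQ0, sq_nonneg d]
    have hdsq : d^2 = 0 := le_antisymm hd2' (sq_nonneg d)
    have hdz : d = 0 := (pow_eq_zero_iff (by norm_num : (2:ℕ) ≠ 0)).1 hdsq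
    exact hL (by rw [← hdL, hdz]; ring)
  have hparts := exec_parts hT' X h hXI hhI
  rw [hh0, mul_zero] at hparts
  have egoal : (fun t => (2*κ*rstar t + 2*φ*(∫ s in (0:ℝ)..t, X s)
        - (∫ s in (0:ℝ)..t, m s)) * h t)
      = fun t => ((2*κ)*(rstar t * h t) + (2*φ)*(h t * ∫ s in (0:ℝ)..t, X s))
          - (∫ s in (0:ℝ)..t, m s) * h t := funext fun t => by ring
  rw [egoal, intervalIntegral.integral_sub
      ((hrh.const_mul (2*κ)).add ((hhI.mul_continuousOn hGcont).const_mul (2*φ))) hMh,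
    intervalIntegral.integral_add (hrh.const_mul (2*κ))
      ((hhI.mul_continuousOn hGcont).const_mul (2*φ)),
    intervalIntegral.integral_const_mul, intervalIntegral.integral_const_mul]
  linear_combination hLdef.symm.trans hL0 + (2*φ)*hparts

theorem stmt9 (κ φ T x : ℝ) (hκ : 0 < κ) (hφ : 0 < φ) (hT : 0 < T) (hx : 0 < x)
    (m : ℝ → ℝ) (hm : IntervalIntegrable m volume 0 T)
    (rstar : ℝ → ℝ) (hadm : execAdm T x rstar)
    (hmin : ∀ r : ℝ → ℝ, execAdm T x r →
      execCost κ φ T x m rstar ≤ execCost κ φ T x m r) :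
    ∃ lam : ℝ, ∀ᵐ t ∂(volume.restrict (Set.Icc (0:ℝ) T)),
      2 * κ * rstar t
        + 2 * φ * (∫ s in (0:ℝ)..t, (x - ∫ u in (0:ℝ)..s, rstar u))
        - (∫ s in (0:ℝ)..t, m s) = lam := by
  classical
  obtain ⟨hrI, hr2I, hrx⟩ := hadm
  have hT' : (0:ℝ) ≤ T := hT.le
  obtain ⟨F, hFdef⟩ : ∃ F : ℝ → ℝ, F = fun t => 2*κ*rstar t
      + 2*φ*(∫ s in (0:ℝ)..t, (x - ∫ u in (0:ℝ)..s, rstar u))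
      - (∫ s in (0:ℝ)..t, m s) := ⟨_, rfl⟩
  have hXcont : ContinuousOn (fun s => x - ∫ u in (0:ℝ)..s, rstar u) (Set.uIcc 0 T) :=
    continuousOn_const.sub (intervalIntegral.continuousOn_primitive_interval' hrI Set.left_mem_uIcc)
  have hXI : IntervalIntegrable (fun s => x - ∫ u in (0:ℝ)..s, rstar u) volume 0 T :=
    hXcont.intervalIntegrable
  have hGcont : ContinuousOn
      (fun t => ∫ s in (0:ℝ)..t, (x - ∫ u in (0:ℝ)..s, rstar u)) (Set.uIcc 0 T) :=
    intervalIntegral.continuousOn_primitive_interval' hXI Set.left_mem_uIcc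
  have hMcont : ContinuousOn (fun t => ∫ s in (0:ℝ)..t, m s) (Set.uIcc 0 T) :=
    intervalIntegral.continuousOn_primitive_interval' hm Set.left_mem_uIcc
  have hbcont : ContinuousOn
      (fun t => 2*φ*(∫ s in (0:ℝ)..t, (x - ∫ u in (0:ℝ)..s, rstar u))
        - (∫ s in (0:ℝ)..t, m s)) (Set.uIcc 0 T) :=
    (continuousOn_const.mul hGcont).sub hMcont
  have hFI : IntervalIntegrable F volume 0 T := by
    rw [hFdef]
    exact ((hrI.const_mul (2*κ)).add
      ((continuousOn_const.mul hGcont).intervalIntegrable)).sub hMcont.intervalIntegrable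
  set c : ℝ := (∫ t in (0:ℝ)..T, F t) / T with hc
  -- the perturbation h₀ = F - c
  have hsplitF : ∀ t : ℝ, F t - c = 2*κ*rstar t
      + ((2*φ*(∫ s in (0:ℝ)..t, (x - ∫ u in (0:ℝ)..s, rstar u))
        - (∫ s in (0:ℝ)..t, m s)) - c) := fun t => by simp only [hFdef]; ring
  have hbc : ContinuousOn
      (fun t => (2*φ*(∫ s in (0:ℝ)..t, (x - ∫ u in (0:ℝ)..s, rstar u))
        - (∫ s in (0:ℝ)..t, m s)) - c) (Set.uIcc 0 T) := hbcont.sub continuousOn_const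
  have hh0I : IntervalIntegrable (fun t => F t - c) volume 0 T :=
    hFI.sub intervalIntegrable_const
  have hrb : IntervalIntegrable (fun t => rstar t *
      ((2*φ*(∫ s in (0:ℝ)..t, (x - ∫ u in (0:ℝ)..s, rstar u))
        - (∫ s in (0:ℝ)..t, m s)) - c)) volume 0 T := hrI.mul_continuousOn hbc
  have hh0sqI : IntervalIntegrable (fun t => (F t - c) ^ 2) volume 0 T := by
    have e : (fun t => (F t - c) ^ 2)
        = fun t => ((2*κ)^2*(rstar t ^ 2)
            + (2*(2*κ))*(rstar t *
              ((2*φ*(∫ s in (0:ℝ)..t, (x - ∫ u in (0:ℝ)..s, rstar u))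
                - (∫ s in (0:ℝ)..t, m s)) - c)))
          + ((2*φ*(∫ s in (0:ℝ)..t, (x - ∫ u in (0:ℝ)..s, rstar u))
                - (∫ s in (0:ℝ)..t, m s)) - c) ^ 2 := by
      funext t
      rw [hsplitF t]
      ring
    rw [e]
    exact ((hr2I.const_mul _).add (hrb.const_mul _)).add (hbc.pow 2).intervalIntegrable
  have hh00 : (∫ t in (0:ℝ)..T, (F t - c)) = 0 := by
    rw [intervalIntegral.integral_sub hFI intervalIntegrable_const,
      intervalIntegral.integral_const, hc]
    have hTne : T ≠ 0 := ne_of_gt hT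
    rw [sub_zero, smul_eq_mul]
    field_simp
    ring
  have hEL := exec_EL hκ hφ hT m rstar hm hrI hr2I hrx hmin
    (fun t => F t - c) hh0I hh0sqI hh00
  -- rewrite the EL integrand as F t * (F t - c)
  have hELF : (∫ t in (0:ℝ)..T, F t * (F t - c)) = 0 := by
    rw [← hEL]
    congr 1
    funext t
    simp only [hFdef]
  have hFh0I : IntervalIntegrable (fun t => F t * (F t - c)) volume 0 T := by
    have e : (fun t => F t * (F t - c)) = fun t => (F t - c) ^ 2 + c * (F t - c) :=
      funext fun t => by ring
    rw [e]
    exact hh0sqI.add (hh0I.const_mul c)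
  have hsq0 : (∫ t in (0:ℝ)..T, (F t - c) ^ 2) = 0 := by
    have e : (fun t => (F t - c) ^ 2) = fun t => F t * (F t - c) - c * (F t - c) :=
      funext fun t => by ring
    rw [e, intervalIntegral.integral_sub hFh0I (hh0I.const_mul c),
      intervalIntegral.integral_const_mul, hELF, hh00]
    ring
  have hsqI : IntegrableOn (fun t => (F t - c) ^ 2) (Set.Ioc 0 T) volume :=
    (intervalIntegrable_iff_integrableOn_Ioc_of_le hT').1 hh0sqI
  rw [intervalIntegral.integral_of_le hT'] at hsq0
  have hae : (fun t => (F t - c) ^ 2) =ᵐ[volume.restrict (Set.Ioc (0:ℝ) T)] 0 :=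
    (integral_eq_zero_iff_of_nonneg_ae
      (Filter.Eventually.of_forall fun t => sq_nonneg _) hsqI).1 hsq0
  refine ⟨c, ?_⟩
  have hmeq : volume.restrict (Set.Icc (0:ℝ) T) = volume.restrict (Set.Ioc (0:ℝ) T) :=
    (Measure.restrict_congr_set MeasureTheory.Ioc_ae_eq_Icc).symm
  rw [hmeq]
  filter_upwards [hae] with t ht
  have ht' : (F t - c) ^ 2 = 0 := ht
  have hFt : F t = c := by
    have := (pow_eq_zero_iff (by norm_num : (2:ℕ) ≠ 0)).1 ht'
    linarith [sub_eq_zero.1 this]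
  calc 2 * κ * rstar t
      + 2 * φ * (∫ s in (0:ℝ)..t, (x - ∫ u in (0:ℝ)..s, rstar u))
      - (∫ s in (0:ℝ)..t, m s) = F t := by simp only [hFdef]
    _ = c := hFt
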